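/- Let f : ℝ × ℝ² → ℝ, u : ℝ × ℝ³ → ℝ³, p : ℝ × ℝ³ → ℝ, and F : ℝ × ℝ³ → ℝ^{3×3} be smooth. Assume: (i) the kinematic boundary condition u̲·N_f = ∂_t f holds on ℝ × ℝ²; (ii) the momentum equation ∂_t u_i + Σ_{m=1}^{3} u_m ∂_m u_i + ∂_i p = Σ_{j=1}^{3} Σ_{m=1}^{3} F_{mj} ∂_m F_{ij} holds on all of ℝ × ℝ³ for i = 1,2,3; and (iii) F̲_k · N_f = 0 on ℝ × ℝ² for each column k. For i ∈ {1,2}, let φ_i : ℝ × ℝ³ → ℝ be smooth with φ_i(t, x', f(t,x')) = ∂_i f(t,x') for all (t,x'), and set q_i = ∂_i p + (∂₃ p) φ_i. Then at every (t,x') ∈ ℝ × ℝ²: D_t(D_t(∂_i f)) = (∂₃p)̲ · ( N_f · (∇φ_i)̲ ) + Σ_{k=1}^{3} D_{F_k}(D_{F_k}(∂_i f)) + 2 Σ_{k=1}^{3} Σ_{s=1}^{2} (∂_i F̲_{sk}) D_{F_k}(∂_s f) − 2 Σ_{j=1}^{2} (∂_i u̲_j) D_t(∂_j f) − N_f ·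 (∇q_i)̲, where (∇h)̲(t,x') = (∇_x h)(t, x', f(t,x')). -/

import Mathlib

open scoped BigOperators
open scoped ContDiff

noncomputable section

/-! Partial derivatives of curried functions of several real variables. -/

/-- derivative in the 1st of 2 arguments -/
def d1_2 (g : ℝ → ℝ → ℝ) : ℝ → ℝ → ℝ := fun a b => deriv (fun s => g s b) a
/-- derivative in the 2nd of 2 arguments -/
def d2_2 (g : ℝ → ℝ → ℝ) : ℝ → ℝ → ℝ := fun a b => deriv (fun s => g a s) b

/-- derivative in the 1st of 3 arguments -/
def d1_3 (g : ℝ → ℝ → ℝ → ℝ) : ℝ → ℝ → ℝ → ℝ := fun a b c => deriv (fun s => g s b c) a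
/-- derivative in the 2nd of 3 arguments -/
def d2_3 (g : ℝ → ℝ → ℝ → ℝ) : ℝ → ℝ → ℝ → ℝ := fun a b c => deriv (fun s => g a s c) b
/-- derivative in the 3rd of 3 arguments -/
def d3_3 (g : ℝ → ℝ → ℝ → ℝ) : ℝ → ℝ → ℝ → ℝ := fun a b c => deriv (fun s => g a b s) c

/-- derivative in the 1st of 4 arguments -/
def d1_4 (g : ℝ → ℝ → ℝ → ℝ → ℝ) : ℝ → ℝ → ℝ → ℝ → ℝ := fun a b c e => deriv (fun s => g s b c e) a
/-- derivative in the 2nd of 4 arguments -/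
def d2_4 (g : ℝ → ℝ → ℝ → ℝ → ℝ) : ℝ → ℝ → ℝ → ℝ → ℝ := fun a b c e => deriv (fun s => g a s c e) b
/-- derivative in the 3rd of 4 arguments -/
def d3_4 (g : ℝ → ℝ → ℝ → ℝ → ℝ) : ℝ → ℝ → ℝ → ℝ → ℝ := fun a b c e => deriv (fun s => g a b s e) c
/-- derivative in the 4th of 4 arguments -/
def d4_4 (g : ℝ → ℝ → ℝ → ℝ → ℝ) : ℝ → ℝ → ℝ → ℝ → ℝ := fun a b c e => deriv (fun s => g a b c s) e

/-- spatial derivatives ∂₁, ∂₂, ∂₃ of v(t, x₁, x₂, x₃) -/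
def dsp : Fin 3 → (ℝ → ℝ → ℝ → ℝ → ℝ) → (ℝ → ℝ → ℝ → ℝ → ℝ) := ![d2_4, d3_4, d4_4]
/-- tangential derivatives ∂₁, ∂₂ of g(t, x₁, x₂) -/
def dtg : Fin 2 → (ℝ → ℝ → ℝ → ℝ) → (ℝ → ℝ → ℝ → ℝ) := ![d2_3, d3_3]
/-- spatial derivatives ∂₁, ∂₂, ∂₃ of v(x₁, x₂, x₃) -/
def dsp3 : Fin 3 → (ℝ → ℝ → ℝ → ℝ) → (ℝ → ℝ → ℝ → ℝ) := ![d1_3, d2_3, d3_3]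
/-- derivatives ∂₁, ∂₂ of g(x₁, x₂) -/
def dtg2 : Fin 2 → (ℝ → ℝ → ℝ) → (ℝ → ℝ → ℝ) := ![d1_2, d2_2]

/-- C^∞ smoothness for a function of 2 real variables -/
def smooth2 (g : ℝ → ℝ → ℝ) : Prop :=
  ContDiff ℝ (⊤ : ℕ∞) (fun p : ℝ × ℝ => g p.1 p.2)
/-- C^∞ smoothness for a function of 3 real variables -/
def smooth3 (g : ℝ → ℝ → ℝ → ℝ) : Prop :=
  ContDiff ℝ (⊤ : ℕ∞) (fun p : ℝ × ℝ × ℝ => g p.1 p.2.1 p.2.2)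
/-- C^∞ smoothness for a function of 4 real variables -/
def smooth4 (g : ℝ → ℝ → ℝ → ℝ → ℝ) : Prop :=
  ContDiff ℝ (⊤ : ℕ∞) (fun p : ℝ × ℝ × ℝ × ℝ => g p.1 p.2.1 p.2.2.1 p.2.2.2)

/-- trace of v(t,x₁,x₂,x₃) on the graph x₃ = f(t,x₁,x₂) -/
def tr (v : ℝ → ℝ → ℝ → ℝ → ℝ) (f : ℝ → ℝ → ℝ → ℝ) : ℝ → ℝ → ℝ → ℝ :=
  fun t x y => v t x y (f t x y)
/-- trace of v(x₁,x₂,x₃) on the graph x₃ = f(x₁,x₂) -/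
def tr2 (v : ℝ → ℝ → ℝ → ℝ) (f : ℝ → ℝ → ℝ) : ℝ → ℝ → ℝ :=
  fun x y => v x y (f x y)

/-- the (non-normalized) outward normal N_f = (−∂₁f, −∂₂f, 1) of the graph of f(t,·) -/
def Nf (f : ℝ → ℝ → ℝ → ℝ) : Fin 3 → ℝ → ℝ → ℝ → ℝ :=
  ![fun t x y => -(d2_3 f t x y), fun t x y => -(d3_3 f t x y), fun _ _ _ => 1]
/-- the (non-normalized) outward normal of the graph of a time-independent f -/
def Nf2 (f : ℝ → ℝ → ℝ) : Fin 3 → ℝ → ℝ → ℝ :=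
  ![fun x y => -(d1_2 f x y), fun x y => -(d2_2 f x y), fun _ _ => 1]

/-- the interface material derivative D_t g = ∂_t g + u̲₁ ∂₁ g + u̲₂ ∂₂ g -/
def Dt (u : Fin 3 → ℝ → ℝ → ℝ → ℝ → ℝ) (f : ℝ → ℝ → ℝ → ℝ)
    (g : ℝ → ℝ → ℝ → ℝ) : ℝ → ℝ → ℝ → ℝ :=
  fun t x y => d1_3 g t x y + tr (u 0) f t x y * d2_3 g t x y + tr (u 1) f t x y * d3_3 g t x y

/-- the material derivative D_t g = ∂_t g + u₁ ∂₁ g + u₂ ∂₂ g for given coefficients u₁,u₂ on ℝ×ℝ² -/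
def Dt2 (u : Fin 2 → ℝ → ℝ → ℝ → ℝ) (g : ℝ → ℝ → ℝ → ℝ) : ℝ → ℝ → ℝ → ℝ :=
  fun t x y => d1_3 g t x y + u 0 t x y * d2_3 g t x y + u 1 t x y * d3_3 g t x y

/-- the tangential deformation derivative D_{F_k} g = F̲₁ₖ ∂₁ g + F̲₂ₖ ∂₂ g -/
def DF (F : Fin 3 → Fin 3 → ℝ → ℝ → ℝ → ℝ → ℝ) (f : ℝ → ℝ → ℝ → ℝ) (k : Fin 3)
    (g : ℝ → ℝ → ℝ → ℝ) : ℝ → ℝ → ℝ → ℝ :=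
  fun t x y => tr (F 0 k) f t x y * d2_3 g t x y + tr (F 1 k) f t x y * d3_3 g t x y

/-- the full material derivative D_t g = ∂_t g + Σ u_m ∂_m g on ℝ×ℝ³ -/
def Dt4 (u : Fin 3 → ℝ → ℝ → ℝ → ℝ → ℝ) (g : ℝ → ℝ → ℝ → ℝ → ℝ) : ℝ → ℝ → ℝ → ℝ → ℝ :=
  fun t x y z => d1_4 g t x y z + ∑ m : Fin 3, u m t x y z * dsp m g t x y z

/-- the spatial Laplacian on ℝ×ℝ³ -/
def lap4 (g : ℝ → ℝ → ℝ → ℝ → ℝ) : ℝ → ℝ → ℝ → ℝ → ℝ :=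
  fun t x y z => ∑ k : Fin 3, dsp k (dsp k g) t x y z

section core
variable {E : Type*} [NormedAddCommGroup E] [NormedSpace ℝ E]

lemma deriv_along (G : E → ℝ) {γ : ℝ → E} {w : E} {a : ℝ}
    (hG : DifferentiableAt ℝ G (γ a)) (hγ : HasDerivAt γ w a) :
    deriv (fun s => G (γ s)) a = fderiv ℝ G (γ a) w :=
  (hG.hasFDerivAt.comp_hasDerivAt a hγ).deriv

lemma smooth_fderiv_apply (G : E → ℝ) (hG : ContDiff ℝ (⊤ : ℕ∞) G) (w : E) :
    ContDiff ℝ (⊤ : ℕ∞) (fun q => fderiv ℝ G q w) := by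
  have h1 : ContDiff ℝ (⊤ : ℕ∞) (fderiv ℝ G) := by
    apply ContDiff.fderiv_right hG
    norm_cast
  exact (ContinuousLinearMap.apply ℝ ℝ w).contDiff.comp h1

lemma schwarz_gen (G : E → ℝ) (hG : ContDiff ℝ (⊤ : ℕ∞) G) (p : E) (v w : E) :
    fderiv ℝ (fun q => fderiv ℝ G q v) p w = fderiv ℝ (fun q => fderiv ℝ G q w) p v := by
  have hsym : IsSymmSndFDerivAt ℝ G p := by
    apply hG.contDiffAt.isSymmSndFDerivAt
    simp only [minSmoothness_of_isRCLikeNormedField]; norm_cast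
  have hd : DifferentiableAt ℝ (fderiv ℝ G) p := by
    have h1 : ContDiff ℝ (⊤ : ℕ∞) (fderiv ℝ G) := by
      apply ContDiff.fderiv_right hG; norm_cast
    exact (h1.differentiable (by norm_cast)).differentiableAt
  have key : ∀ u : E, fderiv ℝ (fun q => fderiv ℝ G q u) p
      = (ContinuousLinearMap.apply ℝ ℝ u).comp (fderiv ℝ (fderiv ℝ G) p) := by
    intro u
    exact ((ContinuousLinearMap.apply ℝ ℝ u).hasFDerivAt.comp p hd.hasFDerivAt).fderiv
  rw [key, key]
  exact hsym.eq w v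
end core

/-! ### three-variable layer -/

def U3 (g : ℝ → ℝ → ℝ → ℝ) : ℝ × ℝ × ℝ → ℝ := fun p => g p.1 p.2.1 p.2.2
def e3 : Fin 3 → ℝ × ℝ × ℝ := ![(1,0,0), (0,1,0), (0,0,1)]

lemma smooth3.diffAt {g : ℝ → ℝ → ℝ → ℝ} (hg : smooth3 g) (p : ℝ × ℝ × ℝ) :
    DifferentiableAt ℝ (U3 g) p := (hg.differentiable (by norm_cast)).differentiableAt

lemma hasDerivAt_line1 (a b c : ℝ) : HasDerivAt (fun s : ℝ => (s, b, c)) ((1,0,0) : ℝ×ℝ×ℝ) a :=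
  (hasDerivAt_id a).prodMk ((hasDerivAt_const a b).prodMk (hasDerivAt_const a c))
lemma hasDerivAt_line2 (a b c : ℝ) : HasDerivAt (fun s : ℝ => (a, s, c)) ((0,1,0) : ℝ×ℝ×ℝ) b :=
  (hasDerivAt_const b a).prodMk ((hasDerivAt_id b).prodMk (hasDerivAt_const b c))
lemma hasDerivAt_line3 (a b c : ℝ) : HasDerivAt (fun s : ℝ => (a, b, s)) ((0,0,1) : ℝ×ℝ×ℝ) c :=
  (hasDerivAt_const c a).prodMk ((hasDerivAt_const c b).prodMk (hasDerivAt_id c))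

lemma dsp3_fderiv {g : ℝ → ℝ → ℝ → ℝ} (hg : smooth3 g) (r : Fin 3) (a b c : ℝ) :
    dsp3 r g a b c = fderiv ℝ (U3 g) (a,b,c) (e3 r) := by
  fin_cases r
  · exact deriv_along (U3 g) (hg.diffAt _) (hasDerivAt_line1 a b c)
  · exact deriv_along (U3 g) (hg.diffAt _) (hasDerivAt_line2 a b c)
  · exact deriv_along (U3 g) (hg.diffAt _) (hasDerivAt_line3 a b c)

lemma smooth3_dsp3 {g : ℝ → ℝ → ℝ → ℝ} (hg : smooth3 g) (r : Fin 3) :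
    smooth3 (dsp3 r g) := by
  have h : (fun p : ℝ × ℝ × ℝ => dsp3 r g p.1 p.2.1 p.2.2)
      = fun p => fderiv ℝ (U3 g) p (e3 r) := by
    funext p
    rw [dsp3_fderiv hg r p.1 p.2.1 p.2.2]
  unfold smooth3
  rw [h]
  exact smooth_fderiv_apply (U3 g) hg (e3 r)

lemma U3_dsp3 {g : ℝ → ℝ → ℝ → ℝ} (hg : smooth3 g) (r : Fin 3) :
    U3 (dsp3 r g) = fun p => fderiv ℝ (U3 g) p (e3 r) := by
  funext p
  exact dsp3_fderiv hg r p.1 p.2.1 p.2.2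

lemma schwarz3 {g : ℝ → ℝ → ℝ → ℝ} (hg : smooth3 g) (r r' : Fin 3) (a b c : ℝ) :
    dsp3 r (dsp3 r' g) a b c = dsp3 r' (dsp3 r g) a b c := by
  rw [dsp3_fderiv (smooth3_dsp3 hg r') r, dsp3_fderiv (smooth3_dsp3 hg r) r',
    U3_dsp3 hg r', U3_dsp3 hg r]
  exact schwarz_gen (U3 g) hg (a,b,c) (e3 r') (e3 r)

-- slice differentiability and HasDerivAt, stated per-variable
lemma slice3_1 {g : ℝ → ℝ → ℝ → ℝ} (hg : smooth3 g) (a b c : ℝ) :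
    HasDerivAt (fun s => g s b c) (d1_3 g a b c) a := by
  have : DifferentiableAt ℝ (fun s => g s b c) a :=
    ((hg.diffAt (a,b,c)).comp a (hasDerivAt_line1 a b c).differentiableAt :
      DifferentiableAt ℝ (U3 g ∘ fun s : ℝ => (s, b, c)) a)
  exact this.hasDerivAt
lemma slice3_2 {g : ℝ → ℝ → ℝ → ℝ} (hg : smooth3 g) (a b c : ℝ) :
    HasDerivAt (fun s => g a s c) (d2_3 g a b c) b := by
  have : DifferentiableAt ℝ (fun s => g a s c) b :=
    ((hg.diffAt (a,b,c)).comp b (hasDerivAt_line2 a b c).differentiableAt :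
      DifferentiableAt ℝ (U3 g ∘ fun s : ℝ => (a, s, c)) b)
  exact this.hasDerivAt
lemma slice3_3 {g : ℝ → ℝ → ℝ → ℝ} (hg : smooth3 g) (a b c : ℝ) :
    HasDerivAt (fun s => g a b s) (d3_3 g a b c) c := by
  have : DifferentiableAt ℝ (fun s => g a b s) c :=
    ((hg.diffAt (a,b,c)).comp c (hasDerivAt_line3 a b c).differentiableAt :
      DifferentiableAt ℝ (U3 g ∘ fun s : ℝ => (a, b, s)) c)
  exact this.hasDerivAt

lemma dsp3_mul {g h : ℝ → ℝ → ℝ → ℝ} (hg : smooth3 g) (hh : smooth3 h) (r : Fin 3) (a b c : ℝ) :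
    dsp3 r (fun t x y => g t x y * h t x y) a b c
      = dsp3 r g a b c * h a b c + g a b c * dsp3 r h a b c := by
  fin_cases r
  · exact ((slice3_1 hg a b c).mul (slice3_1 hh a b c)).deriv
  · exact ((slice3_2 hg a b c).mul (slice3_2 hh a b c)).deriv
  · exact ((slice3_3 hg a b c).mul (slice3_3 hh a b c)).deriv

lemma dsp3_add {g h : ℝ → ℝ → ℝ → ℝ} (hg : smooth3 g) (hh : smooth3 h) (r : Fin 3) (a b c : ℝ) :
    dsp3 r (fun t x y => g t x y + h t x y) a b c
      = dsp3 r g a b c + dsp3 r h a b c := by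
  fin_cases r
  · exact ((slice3_1 hg a b c).add (slice3_1 hh a b c)).deriv
  · exact ((slice3_2 hg a b c).add (slice3_2 hh a b c)).deriv
  · exact ((slice3_3 hg a b c).add (slice3_3 hh a b c)).deriv

lemma dsp3_neg {g : ℝ → ℝ → ℝ → ℝ} (hg : smooth3 g) (r : Fin 3) (a b c : ℝ) :
    dsp3 r (fun t x y => -(g t x y)) a b c = -(dsp3 r g a b c) := by
  fin_cases r
  · exact (slice3_1 hg a b c).neg.deriv
  · exact (slice3_2 hg a b c).neg.deriv
  · exact (slice3_3 hg a b c).neg.deriv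

lemma smooth3_mul {g h : ℝ → ℝ → ℝ → ℝ} (hg : smooth3 g) (hh : smooth3 h) :
    smooth3 (fun t x y => g t x y * h t x y) := hg.mul hh
lemma smooth3_add {g h : ℝ → ℝ → ℝ → ℝ} (hg : smooth3 g) (hh : smooth3 h) :
    smooth3 (fun t x y => g t x y + h t x y) := hg.add hh
lemma smooth3_neg {g : ℝ → ℝ → ℝ → ℝ} (hg : smooth3 g) :
    smooth3 (fun t x y => -(g t x y)) := hg.neg

/-! ### four-variable layer -/

def U4 (g : ℝ → ℝ → ℝ → ℝ → ℝ) : ℝ × ℝ × ℝ × ℝ → ℝ := fun p => g p.1 p.2.1 p.2.2.1 p.2.2.2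
def e4 : Fin 4 → ℝ × ℝ × ℝ × ℝ := ![(1,0,0,0), (0,1,0,0), (0,0,1,0), (0,0,0,1)]
def d4v : Fin 4 → (ℝ → ℝ → ℝ → ℝ → ℝ) → (ℝ → ℝ → ℝ → ℝ → ℝ) := ![d1_4, d2_4, d3_4, d4_4]

lemma smooth4.diffAt {g : ℝ → ℝ → ℝ → ℝ → ℝ} (hg : smooth4 g) (p : ℝ × ℝ × ℝ × ℝ) :
    DifferentiableAt ℝ (U4 g) p := (hg.differentiable (by norm_cast)).differentiableAt

lemma hasDerivAt_line4_1 (a b c e : ℝ) :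
    HasDerivAt (fun s : ℝ => (s, b, c, e)) ((1,0,0,0) : ℝ×ℝ×ℝ×ℝ) a :=
  (hasDerivAt_id a).prodMk ((hasDerivAt_const a b).prodMk
    ((hasDerivAt_const a c).prodMk (hasDerivAt_const a e)))
lemma hasDerivAt_line4_2 (a b c e : ℝ) :
    HasDerivAt (fun s : ℝ => (a, s, c, e)) ((0,1,0,0) : ℝ×ℝ×ℝ×ℝ) b :=
  (hasDerivAt_const b a).prodMk ((hasDerivAt_id b).prodMk
    ((hasDerivAt_const b c).prodMk (hasDerivAt_const b e)))
lemma hasDerivAt_line4_3 (a b c e : ℝ) :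
    HasDerivAt (fun s : ℝ => (a, b, s, e)) ((0,0,1,0) : ℝ×ℝ×ℝ×ℝ) c :=
  (hasDerivAt_const c a).prodMk ((hasDerivAt_const c b).prodMk
    ((hasDerivAt_id c).prodMk (hasDerivAt_const c e)))
lemma hasDerivAt_line4_4 (a b c e : ℝ) :
    HasDerivAt (fun s : ℝ => (a, b, c, s)) ((0,0,0,1) : ℝ×ℝ×ℝ×ℝ) e :=
  (hasDerivAt_const e a).prodMk ((hasDerivAt_const e b).prodMk
    ((hasDerivAt_const e c).prodMk (hasDerivAt_id e)))

lemma d4v_fderiv {g : ℝ → ℝ → ℝ → ℝ → ℝ} (hg : smooth4 g) (r : Fin 4) (a b c e : ℝ) :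
    d4v r g a b c e = fderiv ℝ (U4 g) (a,b,c,e) (e4 r) := by
  fin_cases r
  · exact deriv_along (U4 g) (hg.diffAt _) (hasDerivAt_line4_1 a b c e)
  · exact deriv_along (U4 g) (hg.diffAt _) (hasDerivAt_line4_2 a b c e)
  · exact deriv_along (U4 g) (hg.diffAt _) (hasDerivAt_line4_3 a b c e)
  · exact deriv_along (U4 g) (hg.diffAt _) (hasDerivAt_line4_4 a b c e)

lemma smooth4_d4v {g : ℝ → ℝ → ℝ → ℝ → ℝ} (hg : smooth4 g) (r : Fin 4) :
    smooth4 (d4v r g) := by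
  have h : (fun p : ℝ × ℝ × ℝ × ℝ => d4v r g p.1 p.2.1 p.2.2.1 p.2.2.2)
      = fun p => fderiv ℝ (U4 g) p (e4 r) := by
    funext p
    rw [d4v_fderiv hg r p.1 p.2.1 p.2.2.1 p.2.2.2]
  unfold smooth4
  rw [h]
  exact smooth_fderiv_apply (U4 g) hg (e4 r)

lemma U4_d4v {g : ℝ → ℝ → ℝ → ℝ → ℝ} (hg : smooth4 g) (r : Fin 4) :
    U4 (d4v r g) = fun p => fderiv ℝ (U4 g) p (e4 r) := by
  funext p
  exact d4v_fderiv hg r p.1 p.2.1 p.2.2.1 p.2.2.2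

lemma schwarz4 {g : ℝ → ℝ → ℝ → ℝ → ℝ} (hg : smooth4 g) (r r' : Fin 4) (a b c e : ℝ) :
    d4v r (d4v r' g) a b c e = d4v r' (d4v r g) a b c e := by
  rw [d4v_fderiv (smooth4_d4v hg r') r, d4v_fderiv (smooth4_d4v hg r) r',
    U4_d4v hg r', U4_d4v hg r]
  exact schwarz_gen (U4 g) hg (a,b,c,e) (e4 r') (e4 r)

lemma slice4_1 {g : ℝ → ℝ → ℝ → ℝ → ℝ} (hg : smooth4 g) (a b c e : ℝ) :
    HasDerivAt (fun s => g s b c e) (d1_4 g a b c e) a :=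
  (((hg.diffAt (a,b,c,e)).comp a (hasDerivAt_line4_1 a b c e).differentiableAt :
    DifferentiableAt ℝ (U4 g ∘ fun s : ℝ => (s, b, c, e)) a)).hasDerivAt
lemma slice4_2 {g : ℝ → ℝ → ℝ → ℝ → ℝ} (hg : smooth4 g) (a b c e : ℝ) :
    HasDerivAt (fun s => g a s c e) (d2_4 g a b c e) b :=
  (((hg.diffAt (a,b,c,e)).comp b (hasDerivAt_line4_2 a b c e).differentiableAt :
    DifferentiableAt ℝ (U4 g ∘ fun s : ℝ => (a, s, c, e)) b)).hasDerivAt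
lemma slice4_3 {g : ℝ → ℝ → ℝ → ℝ → ℝ} (hg : smooth4 g) (a b c e : ℝ) :
    HasDerivAt (fun s => g a b s e) (d3_4 g a b c e) c :=
  (((hg.diffAt (a,b,c,e)).comp c (hasDerivAt_line4_3 a b c e).differentiableAt :
    DifferentiableAt ℝ (U4 g ∘ fun s : ℝ => (a, b, s, e)) c)).hasDerivAt
lemma slice4_4 {g : ℝ → ℝ → ℝ → ℝ → ℝ} (hg : smooth4 g) (a b c e : ℝ) :
    HasDerivAt (fun s => g a b c s) (d4_4 g a b c e) e :=
  (((hg.diffAt (a,b,c,e)).comp e (hasDerivAt_line4_4 a b c e).differentiableAt :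
    DifferentiableAt ℝ (U4 g ∘ fun s : ℝ => (a, b, c, s)) e)).hasDerivAt

lemma d4v_mul {g h : ℝ → ℝ → ℝ → ℝ → ℝ} (hg : smooth4 g) (hh : smooth4 h) (r : Fin 4)
    (a b c e : ℝ) :
    d4v r (fun t x y z => g t x y z * h t x y z) a b c e
      = d4v r g a b c e * h a b c e + g a b c e * d4v r h a b c e := by
  fin_cases r
  · exact ((slice4_1 hg a b c e).mul (slice4_1 hh a b c e)).deriv
  · exact ((slice4_2 hg a b c e).mul (slice4_2 hh a b c e)).deriv
  · exact ((slice4_3 hg a b c e).mul (slice4_3 hh a b c e)).deriv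
  · exact ((slice4_4 hg a b c e).mul (slice4_4 hh a b c e)).deriv

lemma d4v_add {g h : ℝ → ℝ → ℝ → ℝ → ℝ} (hg : smooth4 g) (hh : smooth4 h) (r : Fin 4)
    (a b c e : ℝ) :
    d4v r (fun t x y z => g t x y z + h t x y z) a b c e
      = d4v r g a b c e + d4v r h a b c e := by
  fin_cases r
  · exact ((slice4_1 hg a b c e).add (slice4_1 hh a b c e)).deriv
  · exact ((slice4_2 hg a b c e).add (slice4_2 hh a b c e)).deriv
  · exact ((slice4_3 hg a b c e).add (slice4_3 hh a b c e)).deriv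
  · exact ((slice4_4 hg a b c e).add (slice4_4 hh a b c e)).deriv

lemma d4v_neg {g : ℝ → ℝ → ℝ → ℝ → ℝ} (hg : smooth4 g) (r : Fin 4) (a b c e : ℝ) :
    d4v r (fun t x y z => -(g t x y z)) a b c e = -(d4v r g a b c e) := by
  fin_cases r
  · exact (slice4_1 hg a b c e).neg.deriv
  · exact (slice4_2 hg a b c e).neg.deriv
  · exact (slice4_3 hg a b c e).neg.deriv
  · exact (slice4_4 hg a b c e).neg.deriv

lemma smooth4_mul {g h : ℝ → ℝ → ℝ → ℝ → ℝ} (hg : smooth4 g) (hh : smooth4 h) :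
    smooth4 (fun t x y z => g t x y z * h t x y z) := hg.mul hh
lemma smooth4_add {g h : ℝ → ℝ → ℝ → ℝ → ℝ} (hg : smooth4 g) (hh : smooth4 h) :
    smooth4 (fun t x y z => g t x y z + h t x y z) := hg.add hh
lemma smooth4_neg {g : ℝ → ℝ → ℝ → ℝ → ℝ} (hg : smooth4 g) :
    smooth4 (fun t x y z => -(g t x y z)) := hg.neg

/-! ### traces -/

lemma smooth3_tr {v : ℝ → ℝ → ℝ → ℝ → ℝ} {f : ℝ → ℝ → ℝ → ℝ}
    (hv : smooth4 v) (hf : smooth3 f) : smooth3 (tr v f) := by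
  unfold smooth3 tr
  have : (fun p : ℝ × ℝ × ℝ => v p.1 p.2.1 p.2.2 (f p.1 p.2.1 p.2.2))
      = (fun p : ℝ × ℝ × ℝ × ℝ => v p.1 p.2.1 p.2.2.1 p.2.2.2) ∘
        (fun p : ℝ × ℝ × ℝ => (p.1, p.2.1, p.2.2, f p.1 p.2.1 p.2.2)) := rfl
  rw [this]
  have hf' : ContDiff ℝ (⊤:ℕ∞) (fun p : ℝ×ℝ×ℝ => f p.1 p.2.1 p.2.2) := hf
  exact hv.comp (contDiff_fst.prodMk ((contDiff_fst.comp contDiff_snd).prodMk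
    ((contDiff_snd.comp contDiff_snd).prodMk hf')))

lemma tr_chain {v : ℝ → ℝ → ℝ → ℝ → ℝ} {f : ℝ → ℝ → ℝ → ℝ}
    (hv : smooth4 v) (hf : smooth3 f) (r : Fin 3) (a b c : ℝ) :
    dsp3 r (tr v f) a b c
      = tr (d4v r.castSucc v) f a b c + tr (d4_4 v) f a b c * dsp3 r f a b c := by
  have hlin : ∀ (w : ℝ×ℝ×ℝ×ℝ) (fd : ℝ) (r4 : Fin 4), w = e4 r4 + fd • e4 3 →
      fderiv ℝ (U4 v) (a,b,c, f a b c) w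
        = tr (d4v r4 v) f a b c + tr (d4_4 v) f a b c * fd := by
    intro w fd r4 hw
    rw [hw, map_add, map_smul]
    have h1 := (d4v_fderiv hv r4 a b c (f a b c)).symm
    have h2 := (d4v_fderiv hv 3 a b c (f a b c)).symm
    simp only [tr]
    rw [h1] at *
    show _ + fd • (fderiv ℝ (U4 v) (a, b, c, f a b c)) (e4 3) = _
    rw [h2]
    show d4v r4 v a b c (f a b c) + fd * d4v 3 v a b c (f a b c) = _
    have : d4v 3 = d4_4 := rfl
    rw [this]; ring
  fin_cases r
  · show deriv (fun s => v s b c (f s b c)) a = _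
    have hγ : HasDerivAt (fun s : ℝ => (s, b, c, f s b c)) ((1,0,0, d1_3 f a b c) : ℝ×ℝ×ℝ×ℝ) a :=
      (hasDerivAt_id a).prodMk ((hasDerivAt_const a b).prodMk
        ((hasDerivAt_const a c).prodMk (slice3_1 hf a b c)))
    have := deriv_along (U4 v) (hv.diffAt ((a,b,c,f a b c) : ℝ×ℝ×ℝ×ℝ)) hγ
    rw [show (fun s => v s b c (f s b c)) = (fun s => U4 v (s, b, c, f s b c)) from rfl, this]
    have := hlin (1,0,0, d1_3 f a b c) (d1_3 f a b c) 0 (by simp [e4])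
    rw [this]; rfl
  · show deriv (fun s => v a s c (f a s c)) b = _
    have hγ : HasDerivAt (fun s : ℝ => (a, s, c, f a s c)) ((0,1,0, d2_3 f a b c) : ℝ×ℝ×ℝ×ℝ) b :=
      (hasDerivAt_const b a).prodMk ((hasDerivAt_id b).prodMk
        ((hasDerivAt_const b c).prodMk (slice3_2 hf a b c)))
    have := deriv_along (U4 v) (hv.diffAt ((a,b,c,f a b c) : ℝ×ℝ×ℝ×ℝ)) hγ
    rw [show (fun s => v a s c (f a s c)) = (fun s => U4 v (a, s, c, f a s c)) from rfl, this]
    have := hlin (0,1,0, d2_3 f a b c) (d2_3 f a b c) 1 (by simp [e4])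
    rw [this]; rfl
  · show deriv (fun s => v a b s (f a b s)) c = _
    have hγ : HasDerivAt (fun s : ℝ => (a, b, s, f a b s)) ((0,0,1, d3_3 f a b c) : ℝ×ℝ×ℝ×ℝ) c :=
      (hasDerivAt_const c a).prodMk ((hasDerivAt_const c b).prodMk
        ((hasDerivAt_id c).prodMk (slice3_3 hf a b c)))
    have := deriv_along (U4 v) (hv.diffAt ((a,b,c,f a b c) : ℝ×ℝ×ℝ×ℝ)) hγ
    rw [show (fun s => v a b s (f a b s)) = (fun s => U4 v (a, b, s, f a b s)) from rfl, this]
    have := hlin (0,0,1, d3_3 f a b c) (d3_3 f a b c) 2 (by simp [e4])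
    rw [this]; rfl

/-! ### conversions -/


lemma dtg_eq (q : Fin 2) : dtg q = dsp3 q.succ := by fin_cases q <;> rfl
lemma dsp_eq (m : Fin 3) : dsp m = d4v m.succ := by fin_cases m <;> rfl
lemma succ_castSucc (q : Fin 2) : (q.succ : Fin 3).castSucc = (q.castSucc : Fin 3).succ := by
  fin_cases q <;> rfl

lemma smooth3_dtg {g : ℝ → ℝ → ℝ → ℝ} (hg : smooth3 g) (q : Fin 2) : smooth3 (dtg q g) := by
  rw [dtg_eq]; exact smooth3_dsp3 hg _
lemma smooth3_d1_3 {g : ℝ → ℝ → ℝ → ℝ} (hg : smooth3 g) : smooth3 (d1_3 g) :=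
  smooth3_dsp3 hg 0
lemma smooth4_dsp {v : ℝ → ℝ → ℝ → ℝ → ℝ} (hv : smooth4 v) (m : Fin 3) : smooth4 (dsp m v) := by
  rw [dsp_eq]; exact smooth4_d4v hv _
lemma smooth4_d1_4 {v : ℝ → ℝ → ℝ → ℝ → ℝ} (hv : smooth4 v) : smooth4 (d1_4 v) :=
  smooth4_d4v hv 0

lemma dsp3_sub {g h : ℝ → ℝ → ℝ → ℝ} (hg : smooth3 g) (hh : smooth3 h) (r : Fin 3) (a b c : ℝ) :
    dsp3 r (fun t x y => g t x y - h t x y) a b c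
      = dsp3 r g a b c - dsp3 r h a b c := by
  fin_cases r
  · exact ((slice3_1 hg a b c).sub (slice3_1 hh a b c)).deriv
  · exact ((slice3_2 hg a b c).sub (slice3_2 hh a b c)).deriv
  · exact ((slice3_3 hg a b c).sub (slice3_3 hh a b c)).deriv

/-- chain rule for tangential direction: ∂_q (v∘Γf) = (∂_{q+1} v)∘Γf + (∂₃v)∘Γf · ∂_q f -/
lemma tr_dtg {v : ℝ → ℝ → ℝ → ℝ → ℝ} {f : ℝ → ℝ → ℝ → ℝ}
    (hv : smooth4 v) (hf : smooth3 f) (q : Fin 2) (a b c : ℝ) :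
    dtg q (tr v f) a b c
      = tr (dsp q.castSucc v) f a b c + tr (dsp 2 v) f a b c * dtg q f a b c := by
  rw [dtg_eq, dsp_eq, dsp_eq]
  have h := tr_chain hv hf q.succ a b c
  rw [succ_castSucc] at h
  have h2 : d4_4 = d4v ((2:Fin 3).succ) := rfl
  rw [h2] at h
  exact h

/-- chain rule in time -/
lemma tr_d1_3 {v : ℝ → ℝ → ℝ → ℝ → ℝ} {f : ℝ → ℝ → ℝ → ℝ}
    (hv : smooth4 v) (hf : smooth3 f) (a b c : ℝ) :
    d1_3 (tr v f) a b c
      = tr (d1_4 v) f a b c + tr (dsp 2 v) f a b c * d1_3 f a b c := by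
  have h := tr_chain hv hf 0 a b c
  exact h

/-- mixed partials commute, tangential-tangential -/
lemma dtg_dtg {g : ℝ → ℝ → ℝ → ℝ} (hg : smooth3 g) (q r : Fin 2) (a b c : ℝ) :
    dtg q (dtg r g) a b c = dtg r (dtg q g) a b c := by
  rw [dtg_eq, dtg_eq]; exact schwarz3 hg q.succ r.succ a b c

/-- mixed partials commute, tangential-time -/
lemma dtg_d1_3 {g : ℝ → ℝ → ℝ → ℝ} (hg : smooth3 g) (q : Fin 2) (a b c : ℝ) :
    dtg q (d1_3 g) a b c = d1_3 (dtg q g) a b c := by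
  rw [dtg_eq]
  have : d1_3 = dsp3 0 := rfl
  rw [this]
  exact schwarz3 hg q.succ 0 a b c

/-! ### operators on ℝ⁴ -/

/-- 𝔇 v = ∂ᵢv + φ ∂₃v -/
def Dc (i : Fin 2) (φ v : ℝ → ℝ → ℝ → ℝ → ℝ) : ℝ → ℝ → ℝ → ℝ → ℝ :=
  fun t x y z => dsp i.castSucc v t x y z + φ t x y z * dsp 2 v t x y z
/-- full material derivative -/
def MD (u : Fin 3 → ℝ → ℝ → ℝ → ℝ → ℝ) (v : ℝ → ℝ → ℝ → ℝ → ℝ) : ℝ → ℝ → ℝ → ℝ → ℝ :=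
  fun t x y z => d1_4 v t x y z + u 0 t x y z * dsp 0 v t x y z
    + u 1 t x y z * dsp 1 v t x y z + u 2 t x y z * dsp 2 v t x y z
/-- deformation derivative along column k -/
def DF4 (F : Fin 3 → Fin 3 → ℝ → ℝ → ℝ → ℝ → ℝ) (k : Fin 3) (v : ℝ → ℝ → ℝ → ℝ → ℝ) :
    ℝ → ℝ → ℝ → ℝ → ℝ :=
  fun t x y z => F 0 k t x y z * dsp 0 v t x y z
    + F 1 k t x y z * dsp 1 v t x y z + F 2 k t x y z * dsp 2 v t x y z

section ops
variable {i : Fin 2} {φ : ℝ → ℝ → ℝ → ℝ → ℝ} {u F' : Fin 3 → ℝ → ℝ → ℝ → ℝ → ℝ}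
  {F : Fin 3 → Fin 3 → ℝ → ℝ → ℝ → ℝ → ℝ} {v p : ℝ → ℝ → ℝ → ℝ → ℝ}

lemma smooth4_Dc (hφs : smooth4 φ) (hv : smooth4 v) : smooth4 (Dc i φ v) :=
  smooth4_add (smooth4_dsp hv i.castSucc) (smooth4_mul hφs (smooth4_dsp hv 2))
lemma smooth4_MD (hu : ∀ m, smooth4 (u m)) (hv : smooth4 v) : smooth4 (MD u v) :=
  smooth4_add (smooth4_add (smooth4_add (smooth4_d1_4 hv)
    (smooth4_mul (hu 0) (smooth4_dsp hv 0))) (smooth4_mul (hu 1) (smooth4_dsp hv 1)))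
    (smooth4_mul (hu 2) (smooth4_dsp hv 2))
lemma smooth4_DF4 (hF : ∀ m j, smooth4 (F m j)) (k : Fin 3) (hv : smooth4 v) :
    smooth4 (DF4 F k v) :=
  smooth4_add (smooth4_add (smooth4_mul (hF 0 k) (smooth4_dsp hv 0))
    (smooth4_mul (hF 1 k) (smooth4_dsp hv 1))) (smooth4_mul (hF 2 k) (smooth4_dsp hv 2))

lemma d4v_Dc (hφs : smooth4 φ) (hv : smooth4 v) (r : Fin 4) (a b c e : ℝ) :
    d4v r (Dc i φ v) a b c e
      = d4v r (d4v i.castSucc.succ v) a b c e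
        + d4v r φ a b c e * d4v 3 v a b c e + φ a b c e * d4v r (d4v 3 v) a b c e := by
  have h1 : d4v r (Dc i φ v) a b c e
      = d4v r (dsp i.castSucc v) a b c e
        + d4v r (fun t x y z => φ t x y z * dsp 2 v t x y z) a b c e :=
    d4v_add (smooth4_dsp hv i.castSucc) (smooth4_mul hφs (smooth4_dsp hv 2)) r a b c e
  have h2 : d4v r (fun t x y z => φ t x y z * dsp 2 v t x y z) a b c e
      = d4v r φ a b c e * dsp 2 v a b c e + φ a b c e * d4v r (dsp 2 v) a b c e :=
    d4v_mul hφs (smooth4_dsp hv 2) r a b c e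
  rw [h1, h2, dsp_eq, dsp_eq 2]
  have h3 : (Fin.succ 2 : Fin 4) = 3 := rfl
  rw [h3]; ring

lemma d4v_MD (hu : ∀ m, smooth4 (u m)) (hv : smooth4 v) (r : Fin 4) (a b c e : ℝ) :
    d4v r (MD u v) a b c e
      = d4v r (d4v 0 v) a b c e
        + d4v r (u 0) a b c e * d4v 1 v a b c e + u 0 a b c e * d4v r (d4v 1 v) a b c e
        + d4v r (u 1) a b c e * d4v 2 v a b c e + u 1 a b c e * d4v r (d4v 2 v) a b c e
        + d4v r (u 2) a b c e * d4v 3 v a b c e + u 2 a b c e * d4v r (d4v 3 v) a b c e := by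
  have h1 : d4v r (MD u v) a b c e
      = d4v r (fun t x y z => d1_4 v t x y z + u 0 t x y z * dsp 0 v t x y z
          + u 1 t x y z * dsp 1 v t x y z) a b c e
        + d4v r (fun t x y z => u 2 t x y z * dsp 2 v t x y z) a b c e :=
    d4v_add (smooth4_add (smooth4_add (smooth4_d1_4 hv)
      (smooth4_mul (hu 0) (smooth4_dsp hv 0))) (smooth4_mul (hu 1) (smooth4_dsp hv 1)))
      (smooth4_mul (hu 2) (smooth4_dsp hv 2)) r a b c e
  have h2 : d4v r (fun t x y z => d1_4 v t x y z + u 0 t x y z * dsp 0 v t x y z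
        + u 1 t x y z * dsp 1 v t x y z) a b c e
      = d4v r (fun t x y z => d1_4 v t x y z + u 0 t x y z * dsp 0 v t x y z) a b c e
        + d4v r (fun t x y z => u 1 t x y z * dsp 1 v t x y z) a b c e :=
    d4v_add (smooth4_add (smooth4_d1_4 hv) (smooth4_mul (hu 0) (smooth4_dsp hv 0)))
      (smooth4_mul (hu 1) (smooth4_dsp hv 1)) r a b c e
  have h3 : d4v r (fun t x y z => d1_4 v t x y z + u 0 t x y z * dsp 0 v t x y z) a b c e
      = d4v r (d1_4 v) a b c e + d4v r (fun t x y z => u 0 t x y z * dsp 0 v t x y z) a b c e :=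
    d4v_add (smooth4_d1_4 hv) (smooth4_mul (hu 0) (smooth4_dsp hv 0)) r a b c e
  have m0 := d4v_mul (hu 0) (smooth4_dsp hv 0) r a b c e
  have m1 := d4v_mul (hu 1) (smooth4_dsp hv 1) r a b c e
  have m2 := d4v_mul (hu 2) (smooth4_dsp hv 2) r a b c e
  rw [h1, h2, h3, m0, m1, m2]
  show d4v r (d4v 0 v) a b c e + _ + _ + _ = _
  have e0 : dsp 0 = d4v 1 := rfl
  have e1 : dsp 1 = d4v 2 := rfl
  have e2 : dsp 2 = d4v 3 := rfl
  rw [e0, e1, e2]; ring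

lemma d4v_DF4 (hF : ∀ m j, smooth4 (F m j)) (k : Fin 3) (hv : smooth4 v) (r : Fin 4)
    (a b c e : ℝ) :
    d4v r (DF4 F k v) a b c e
      = d4v r (F 0 k) a b c e * d4v 1 v a b c e + F 0 k a b c e * d4v r (d4v 1 v) a b c e
        + d4v r (F 1 k) a b c e * d4v 2 v a b c e + F 1 k a b c e * d4v r (d4v 2 v) a b c e
        + d4v r (F 2 k) a b c e * d4v 3 v a b c e + F 2 k a b c e * d4v r (d4v 3 v) a b c e := by
  have h1 : d4v r (DF4 F k v) a b c e
      = d4v r (fun t x y z => F 0 k t x y z * dsp 0 v t x y z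
          + F 1 k t x y z * dsp 1 v t x y z) a b c e
        + d4v r (fun t x y z => F 2 k t x y z * dsp 2 v t x y z) a b c e :=
    d4v_add (smooth4_add (smooth4_mul (hF 0 k) (smooth4_dsp hv 0))
      (smooth4_mul (hF 1 k) (smooth4_dsp hv 1))) (smooth4_mul (hF 2 k) (smooth4_dsp hv 2))
      r a b c e
  have h2 : d4v r (fun t x y z => F 0 k t x y z * dsp 0 v t x y z
        + F 1 k t x y z * dsp 1 v t x y z) a b c e
      = d4v r (fun t x y z => F 0 k t x y z * dsp 0 v t x y z) a b c e
        + d4v r (fun t x y z => F 1 k t x y z * dsp 1 v t x y z) a b c e :=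
    d4v_add (smooth4_mul (hF 0 k) (smooth4_dsp hv 0)) (smooth4_mul (hF 1 k) (smooth4_dsp hv 1))
      r a b c e
  have m0 := d4v_mul (hF 0 k) (smooth4_dsp hv 0) r a b c e
  have m1 := d4v_mul (hF 1 k) (smooth4_dsp hv 1) r a b c e
  have m2 := d4v_mul (hF 2 k) (smooth4_dsp hv 2) r a b c e
  rw [h1, h2, m0, m1, m2]
  have e0 : dsp 0 = d4v 1 := rfl
  have e1 : dsp 1 = d4v 2 := rfl
  have e2 : dsp 2 = d4v 3 := rfl
  rw [e0, e1, e2]; ring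

/-- commutator of the material derivative with 𝔇 -/
lemma commMD (hφs : smooth4 φ) (hu : ∀ m, smooth4 (u m)) (hv : smooth4 v) (a b c e : ℝ) :
    MD u (Dc i φ v) a b c e
      = Dc i φ (MD u v) a b c e
        - (Dc i φ (u 0) a b c e * dsp 0 v a b c e + Dc i φ (u 1) a b c e * dsp 1 v a b c e
            + Dc i φ (u 2) a b c e * dsp 2 v a b c e)
        + MD u φ a b c e * dsp 2 v a b c e := by
  have L : MD u (Dc i φ v) a b c e
      = d4v 0 (Dc i φ v) a b c e + u 0 a b c e * d4v 1 (Dc i φ v) a b c e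
        + u 1 a b c e * d4v 2 (Dc i φ v) a b c e + u 2 a b c e * d4v 3 (Dc i φ v) a b c e := rfl
  have R1 : Dc i φ (MD u v) a b c e
      = d4v i.castSucc.succ (MD u v) a b c e + φ a b c e * d4v 3 (MD u v) a b c e := by
    show dsp i.castSucc (MD u v) a b c e + φ a b c e * dsp 2 (MD u v) a b c e = _
    rw [dsp_eq, dsp_eq]; rfl
  have R2 : ∀ m, Dc i φ (u m) a b c e
      = d4v i.castSucc.succ (u m) a b c e + φ a b c e * d4v 3 (u m) a b c e := by
    intro m
    show dsp i.castSucc (u m) a b c e + φ a b c e * dsp 2 (u m) a b c e = _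
    rw [dsp_eq, dsp_eq]; rfl
  have R3 : MD u φ a b c e
      = d4v 0 φ a b c e + u 0 a b c e * d4v 1 φ a b c e + u 1 a b c e * d4v 2 φ a b c e
        + u 2 a b c e * d4v 3 φ a b c e := rfl
  have E0 : dsp 0 v = d4v 1 v := by rw [dsp_eq]; rfl
  have E1 : dsp 1 v = d4v 2 v := by rw [dsp_eq]; rfl
  have E2 : dsp 2 v = d4v 3 v := by rw [dsp_eq]; rfl
  rw [L, R1, R2 0, R2 1, R2 2, R3, E0, E1, E2,
    d4v_Dc hφs hv 0, d4v_Dc hφs hv 1, d4v_Dc hφs hv 2, d4v_Dc hφs hv 3,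
    d4v_MD hu hv i.castSucc.succ, d4v_MD hu hv 3]
  linear_combination (schwarz4 hv 0 i.castSucc.succ a b c e)
    + u 0 a b c e * schwarz4 hv 1 i.castSucc.succ a b c e
    + u 1 a b c e * schwarz4 hv 2 i.castSucc.succ a b c e
    + u 2 a b c e * schwarz4 hv 3 i.castSucc.succ a b c e
    + φ a b c e * schwarz4 hv 0 3 a b c e
    + φ a b c e * u 0 a b c e * schwarz4 hv 1 3 a b c e
    + φ a b c e * u 1 a b c e * schwarz4 hv 2 3 a b c e

/-- commutator of the deformation derivative with 𝔇 -/
lemma commDF4 (hφs : smooth4 φ) (hF : ∀ m j, smooth4 (F m j)) (k : Fin 3) (hv : smooth4 v)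
    (a b c e : ℝ) :
    DF4 F k (Dc i φ v) a b c e
      = Dc i φ (DF4 F k v) a b c e
        - (Dc i φ (F 0 k) a b c e * dsp 0 v a b c e + Dc i φ (F 1 k) a b c e * dsp 1 v a b c e
            + Dc i φ (F 2 k) a b c e * dsp 2 v a b c e)
        + DF4 F k φ a b c e * dsp 2 v a b c e := by
  have L : DF4 F k (Dc i φ v) a b c e
      = F 0 k a b c e * d4v 1 (Dc i φ v) a b c e
        + F 1 k a b c e * d4v 2 (Dc i φ v) a b c e
        + F 2 k a b c e * d4v 3 (Dc i φ v) a b c e := rfl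
  have R1 : Dc i φ (DF4 F k v) a b c e
      = d4v i.castSucc.succ (DF4 F k v) a b c e + φ a b c e * d4v 3 (DF4 F k v) a b c e := by
    show dsp i.castSucc (DF4 F k v) a b c e + φ a b c e * dsp 2 (DF4 F k v) a b c e = _
    rw [dsp_eq, dsp_eq]; rfl
  have R2 : ∀ m j, Dc i φ (F m j) a b c e
      = d4v i.castSucc.succ (F m j) a b c e + φ a b c e * d4v 3 (F m j) a b c e := by
    intro m j
    show dsp i.castSucc (F m j) a b c e + φ a b c e * dsp 2 (F m j) a b c e = _
    rw [dsp_eq, dsp_eq]; rfl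
  have R3 : DF4 F k φ a b c e
      = F 0 k a b c e * d4v 1 φ a b c e + F 1 k a b c e * d4v 2 φ a b c e
        + F 2 k a b c e * d4v 3 φ a b c e := rfl
  have E0 : dsp 0 v = d4v 1 v := by rw [dsp_eq]; rfl
  have E1 : dsp 1 v = d4v 2 v := by rw [dsp_eq]; rfl
  have E2 : dsp 2 v = d4v 3 v := by rw [dsp_eq]; rfl
  rw [L, R1, R2 0 k, R2 1 k, R2 2 k, R3, E0, E1, E2,
    d4v_Dc hφs hv 1, d4v_Dc hφs hv 2, d4v_Dc hφs hv 3,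
    d4v_DF4 hF k hv i.castSucc.succ, d4v_DF4 hF k hv 3]
  linear_combination F 0 k a b c e * schwarz4 hv 1 i.castSucc.succ a b c e
    + F 1 k a b c e * schwarz4 hv 2 i.castSucc.succ a b c e
    + F 2 k a b c e * schwarz4 hv 3 i.castSucc.succ a b c e
    + φ a b c e * F 0 k a b c e * schwarz4 hv 1 3 a b c e
    + φ a b c e * F 1 k a b c e * schwarz4 hv 2 3 a b c e

/-- 𝔇 of a spatial derivative of p, in terms of q = ∂ᵢp + ∂₃p·φ -/
lemma Dc_dsp_p (hφs : smooth4 φ) (hp : smooth4 p) (m : Fin 3) (a b c e : ℝ) :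
    Dc i φ (dsp m p) a b c e
      = dsp m (fun t x y z => dsp i.castSucc p t x y z + dsp 2 p t x y z * φ t x y z) a b c e
        - dsp m φ a b c e * dsp 2 p a b c e := by
  have L : Dc i φ (dsp m p) a b c e
      = d4v i.castSucc.succ (d4v m.succ p) a b c e
        + φ a b c e * d4v 3 (d4v m.succ p) a b c e := by
    show dsp i.castSucc (dsp m p) a b c e + φ a b c e * dsp 2 (dsp m p) a b c e = _
    rw [dsp_eq m, dsp_eq i.castSucc, dsp_eq 2]; rfl
  have R1 : dsp m (fun t x y z => dsp i.castSucc p t x y z + dsp 2 p t x y z * φ t x y z) a b c e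
      = d4v m.succ (dsp i.castSucc p) a b c e
        + (d4v m.succ (dsp 2 p) a b c e * φ a b c e
            + dsp 2 p a b c e * d4v m.succ φ a b c e) := by
    rw [dsp_eq m]
    rw [d4v_add (smooth4_dsp hp i.castSucc) (smooth4_mul (smooth4_dsp hp 2) hφs) m.succ a b c e,
      d4v_mul (smooth4_dsp hp 2) hφs m.succ a b c e]
  have E1 : dsp i.castSucc p = d4v i.castSucc.succ p := by rw [dsp_eq]
  have E2 : dsp 2 p = d4v 3 p := by rw [dsp_eq]; rfl
  have E3 : dsp m φ = d4v m.succ φ := by rw [dsp_eq]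
  rw [L, R1, E1, E2, E3]
  linear_combination schwarz4 hp i.castSucc.succ m.succ a b c e
    + φ a b c e * schwarz4 hp 3 m.succ a b c e

end ops

/-! ### more 3-variable algebra -/

lemma smooth3_sub {g h : ℝ → ℝ → ℝ → ℝ} (hg : smooth3 g) (hh : smooth3 h) :
    smooth3 (fun t x y => g t x y - h t x y) := hg.sub hh

/-- ∂ᵣ of A + B·g + C·h -/
lemma dsp3_comb {A B C g h : ℝ → ℝ → ℝ → ℝ} (hA : smooth3 A) (hB : smooth3 B) (hC : smooth3 C)
    (hg : smooth3 g) (hh : smooth3 h) (r : Fin 3) (a b c : ℝ) :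
    dsp3 r (fun t x y => A t x y + B t x y * g t x y + C t x y * h t x y) a b c
      = dsp3 r A a b c + dsp3 r B a b c * g a b c + B a b c * dsp3 r g a b c
        + dsp3 r C a b c * h a b c + C a b c * dsp3 r h a b c := by
  have e1 : dsp3 r (fun t x y => A t x y + B t x y * g t x y + C t x y * h t x y) a b c
      = dsp3 r (fun t x y => A t x y + B t x y * g t x y) a b c
        + dsp3 r (fun t x y => C t x y * h t x y) a b c :=
    dsp3_add (smooth3_add hA (smooth3_mul hB hg)) (smooth3_mul hC hh) r a b c
  have e2 : dsp3 r (fun t x y => A t x y + B t x y * g t x y) a b c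
      = dsp3 r A a b c + dsp3 r (fun t x y => B t x y * g t x y) a b c :=
    dsp3_add hA (smooth3_mul hB hg) r a b c
  have e3 := dsp3_mul hB hg r a b c
  have e4 := dsp3_mul hC hh r a b c
  rw [e1, e2, e3, e4]; ring

/-- ∂ᵣ of B·g + C·h -/
lemma dsp3_comb2 {B C g h : ℝ → ℝ → ℝ → ℝ} (hB : smooth3 B) (hC : smooth3 C)
    (hg : smooth3 g) (hh : smooth3 h) (r : Fin 3) (a b c : ℝ) :
    dsp3 r (fun t x y => B t x y * g t x y + C t x y * h t x y) a b c
      = dsp3 r B a b c * g a b c + B a b c * dsp3 r g a b c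
        + dsp3 r C a b c * h a b c + C a b c * dsp3 r h a b c := by
  have e1 : dsp3 r (fun t x y => B t x y * g t x y + C t x y * h t x y) a b c
      = dsp3 r (fun t x y => B t x y * g t x y) a b c
        + dsp3 r (fun t x y => C t x y * h t x y) a b c :=
    dsp3_add (smooth3_mul hB hg) (smooth3_mul hC hh) r a b c
  have e3 := dsp3_mul hB hg r a b c
  have e4 := dsp3_mul hC hh r a b c
  rw [e1, e3, e4]; ring

/-- ∂ᵣ of −A·g0 − B·g1 + g2 -/
lemma dsp3_comb3 {A B g0 g1 g2 : ℝ → ℝ → ℝ → ℝ} (hA : smooth3 A) (hB : smooth3 B)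
    (hg0 : smooth3 g0) (hg1 : smooth3 g1) (hg2 : smooth3 g2) (r : Fin 3) (a b c : ℝ) :
    dsp3 r (fun t x y => -(A t x y) * g0 t x y - B t x y * g1 t x y + g2 t x y) a b c
      = -(dsp3 r A a b c) * g0 a b c - A a b c * dsp3 r g0 a b c
        - dsp3 r B a b c * g1 a b c - B a b c * dsp3 r g1 a b c + dsp3 r g2 a b c := by
  have sA : smooth3 (fun t x y => -(A t x y)) := smooth3_neg hA
  have e1 : dsp3 r (fun t x y => -(A t x y) * g0 t x y - B t x y * g1 t x y + g2 t x y) a b c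
      = dsp3 r (fun t x y => -(A t x y) * g0 t x y - B t x y * g1 t x y) a b c
        + dsp3 r g2 a b c :=
    dsp3_add (smooth3_sub (smooth3_mul sA hg0) (smooth3_mul hB hg1)) hg2 r a b c
  have e2 : dsp3 r (fun t x y => -(A t x y) * g0 t x y - B t x y * g1 t x y) a b c
      = dsp3 r (fun t x y => -(A t x y) * g0 t x y) a b c
        - dsp3 r (fun t x y => B t x y * g1 t x y) a b c :=
    dsp3_sub (smooth3_mul sA hg0) (smooth3_mul hB hg1) r a b c
  have e3 : dsp3 r (fun t x y => -(A t x y) * g0 t x y) a b c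
      = dsp3 r (fun t x y => -(A t x y)) a b c * g0 a b c
        + (-(A a b c)) * dsp3 r g0 a b c := dsp3_mul sA hg0 r a b c
  have e4 := dsp3_mul hB hg1 r a b c
  have e5 := dsp3_neg hA r a b c
  rw [e1, e2, e3, e4, e5]; ring

/-! ### ℝ⁴ combination expansion for 𝔇 -/

lemma d4v_comb4 {A B C D : ℝ → ℝ → ℝ → ℝ → ℝ} (hA : smooth4 A) (hB : smooth4 B)
    (hC : smooth4 C) (hD : smooth4 D) (r : Fin 4) (a b c e : ℝ) :
    d4v r (fun t x y z => -(A t x y z) + (B t x y z + C t x y z + D t x y z)) a b c e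
      = -(d4v r A a b c e) + (d4v r B a b c e + d4v r C a b c e + d4v r D a b c e) := by
  have e1 : d4v r (fun t x y z => -(A t x y z) + (B t x y z + C t x y z + D t x y z)) a b c e
      = d4v r (fun t x y z => -(A t x y z)) a b c e
        + d4v r (fun t x y z => B t x y z + C t x y z + D t x y z) a b c e :=
    d4v_add (smooth4_neg hA) (smooth4_add (smooth4_add hB hC) hD) r a b c e
  have e2 : d4v r (fun t x y z => B t x y z + C t x y z + D t x y z) a b c e
      = d4v r (fun t x y z => B t x y z + C t x y z) a b c e + d4v r D a b c e :=
    d4v_add (smooth4_add hB hC) hD r a b c e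
  have e3 : d4v r (fun t x y z => B t x y z + C t x y z) a b c e
      = d4v r B a b c e + d4v r C a b c e := d4v_add hB hC r a b c e
  have e4 := d4v_neg hA r a b c e
  rw [e1, e2, e3, e4]

lemma Dc_comb {i : Fin 2} {φ A B C D : ℝ → ℝ → ℝ → ℝ → ℝ} (hA : smooth4 A) (hB : smooth4 B)
    (hC : smooth4 C) (hD : smooth4 D) (a b c e : ℝ) :
    Dc i φ (fun t x y z => -(A t x y z) + (B t x y z + C t x y z + D t x y z)) a b c e
      = -(Dc i φ A a b c e) + (Dc i φ B a b c e + Dc i φ C a b c e + Dc i φ D a b c e) := by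
  show dsp i.castSucc (fun t x y z => -(A t x y z) + (B t x y z + C t x y z + D t x y z)) a b c e
      + φ a b c e * dsp 2 (fun t x y z => -(A t x y z) + (B t x y z + C t x y z + D t x y z)) a b c e = _
  rw [dsp_eq i.castSucc, dsp_eq 2, d4v_comb4 hA hB hC hD, d4v_comb4 hA hB hC hD]
  show _ = -(dsp i.castSucc A a b c e + φ a b c e * dsp 2 A a b c e)
    + (dsp i.castSucc B a b c e + φ a b c e * dsp 2 B a b c e
      + (dsp i.castSucc C a b c e + φ a b c e * dsp 2 C a b c e)
      + (dsp i.castSucc D a b c e + φ a b c e * dsp 2 D a b c e))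
  rw [dsp_eq i.castSucc]
  try rw [dsp_eq 2]
  try ring

/-! ### interface operators applied to traces -/

section traceops
variable {f : ℝ → ℝ → ℝ → ℝ} {u : Fin 3 → ℝ → ℝ → ℝ → ℝ → ℝ}
  {F : Fin 3 → Fin 3 → ℝ → ℝ → ℝ → ℝ → ℝ} {φ v : ℝ → ℝ → ℝ → ℝ → ℝ} {i : Fin 2}

/-- D_t of a trace is the trace of the material derivative (uses the kinematic BC) -/
lemma Dt_tr (hf : smooth3 f)
    (hkbc' : ∀ t x y, tr (u 2) f t x y = d1_3 f t x y
      + tr (u 0) f t x y * d2_3 f t x y + tr (u 1) f t x y * d3_3 f t x y)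
    (hv : smooth4 v) (t x y : ℝ) :
    Dt u f (tr v f) t x y = tr (MD u v) f t x y := by
  have h1 : d1_3 (tr v f) t x y
      = tr (d1_4 v) f t x y + tr (dsp 2 v) f t x y * d1_3 f t x y := tr_d1_3 hv hf t x y
  have h2 : d2_3 (tr v f) t x y
      = tr (dsp 0 v) f t x y + tr (dsp 2 v) f t x y * d2_3 f t x y := tr_dtg hv hf 0 t x y
  have h3 : d3_3 (tr v f) t x y
      = tr (dsp 1 v) f t x y + tr (dsp 2 v) f t x y * d3_3 f t x y := tr_dtg hv hf 1 t x y
  have hR : tr (MD u v) f t x y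
      = tr (d1_4 v) f t x y + tr (u 0) f t x y * tr (dsp 0 v) f t x y
        + tr (u 1) f t x y * tr (dsp 1 v) f t x y
        + tr (u 2) f t x y * tr (dsp 2 v) f t x y := rfl
  show d1_3 (tr v f) t x y + tr (u 0) f t x y * d2_3 (tr v f) t x y
      + tr (u 1) f t x y * d3_3 (tr v f) t x y = _
  rw [h1, h2, h3, hR]
  linear_combination (-(tr (dsp 2 v) f t x y)) * hkbc' t x y

/-- D_{F_k} of a trace is the trace of the deformation derivative (uses the tangency condition) -/
lemma DF_tr (hf : smooth3 f) (k : Fin 3)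
    (htang' : ∀ t x y, tr (F 2 k) f t x y
      = tr (F 0 k) f t x y * d2_3 f t x y + tr (F 1 k) f t x y * d3_3 f t x y)
    (hv : smooth4 v) (t x y : ℝ) :
    DF F f k (tr v f) t x y = tr (DF4 F k v) f t x y := by
  have h2 : d2_3 (tr v f) t x y
      = tr (dsp 0 v) f t x y + tr (dsp 2 v) f t x y * d2_3 f t x y := tr_dtg hv hf 0 t x y
  have h3 : d3_3 (tr v f) t x y
      = tr (dsp 1 v) f t x y + tr (dsp 2 v) f t x y * d3_3 f t x y := tr_dtg hv hf 1 t x y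
  have hR : tr (DF4 F k v) f t x y
      = tr (F 0 k) f t x y * tr (dsp 0 v) f t x y
        + tr (F 1 k) f t x y * tr (dsp 1 v) f t x y
        + tr (F 2 k) f t x y * tr (dsp 2 v) f t x y := rfl
  show tr (F 0 k) f t x y * d2_3 (tr v f) t x y + tr (F 1 k) f t x y * d3_3 (tr v f) t x y = _
  rw [h2, h3, hR]
  linear_combination (-(tr (dsp 2 v) f t x y)) * htang' t x y

/-- the trace of 𝔇v is ∂ᵢ of the trace of v (uses that φ extends ∂ᵢf) -/
lemma Dc_tr (hf : smooth3 f)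
    (hφtr : ∀ t x y, tr φ f t x y = dtg i f t x y)
    (hv : smooth4 v) (t x y : ℝ) :
    tr (Dc i φ v) f t x y = dtg i (tr v f) t x y := by
  have hL : tr (Dc i φ v) f t x y
      = tr (dsp i.castSucc v) f t x y + tr φ f t x y * tr (dsp 2 v) f t x y := rfl
  have hR : dtg i (tr v f) t x y
      = tr (dsp i.castSucc v) f t x y + tr (dsp 2 v) f t x y * dtg i f t x y :=
    tr_dtg hv hf i t x y
  rw [hL, hR]
  linear_combination tr (dsp 2 v) f t x y * hφtr t x y

end traceops


/-- the central evolution equation (3.4) for ∂_i f, with an arbitrary smooth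
extension φ of ∂_i f. -/
theorem interface_evolution_equation
    (f : ℝ → ℝ → ℝ → ℝ) (u : Fin 3 → ℝ → ℝ → ℝ → ℝ → ℝ)
    (p : ℝ → ℝ → ℝ → ℝ → ℝ) (F : Fin 3 → Fin 3 → ℝ → ℝ → ℝ → ℝ → ℝ)
    (hf : smooth3 f) (hu : ∀ i, smooth4 (u i)) (hp : smooth4 p)
    (hF : ∀ i j, smooth4 (F i j))
    (hkbc : ∀ t x y, (∑ k : Fin 3, tr (u k) f t x y * Nf f k t x y) = d1_3 f t x y)
    (hmom : ∀ i : Fin 3, ∀ t x y z,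
      d1_4 (u i) t x y z + (∑ m : Fin 3, u m t x y z * dsp m (u i) t x y z)
        + dsp i p t x y z
        = ∑ j : Fin 3, ∑ m : Fin 3, F m j t x y z * dsp m (F i j) t x y z)
    (htang : ∀ k : Fin 3, ∀ t x y,
      (∑ m : Fin 3, tr (F m k) f t x y * Nf f m t x y) = 0) :
    ∀ i : Fin 2, ∀ φ : ℝ → ℝ → ℝ → ℝ → ℝ, smooth4 φ →
      (∀ t x y, φ t x y (f t x y) = dtg i f t x y) →
      ∀ t x y,
        Dt u f (Dt u f (dtg i f)) t x y
          = tr (dsp 2 p) f t x y * (∑ k : Fin 3, Nf f k t x y * tr (dsp k φ) f t x y)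
            + (∑ k : Fin 3, DF F f k (DF F f k (dtg i f)) t x y)
            + 2 * ∑ k : Fin 3, ∑ s : Fin 2,
                dtg i (tr (F s.castSucc k) f) t x y * DF F f k (dtg s f) t x y
            - 2 * ∑ j : Fin 2,
                dtg i (tr (u j.castSucc) f) t x y * Dt u f (dtg j f) t x y
            - ∑ k : Fin 3,
                Nf f k t x y
                  * tr (dsp k (fun a b c e =>
                      dsp i.castSucc p a b c e + dsp 2 p a b c e * φ a b c e)) f t x y := by
  intro i φ hφs hφtr t x y
  -- pointwise rewritten kinematic boundary condition
  have kbc' : ∀ a b c : ℝ, tr (u 2) f a b c = d1_3 f a b c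
      + tr (u 0) f a b c * dtg 0 f a b c + tr (u 1) f a b c * dtg 1 f a b c := by
    intro a b c
    have h := hkbc a b c
    rw [Fin.sum_univ_three] at h
    have n0 : Nf f 0 a b c = -(dtg 0 f a b c) := rfl
    have n1 : Nf f 1 a b c = -(dtg 1 f a b c) := rfl
    have n2 : Nf f 2 a b c = 1 := rfl
    rw [n0, n1, n2] at h
    linear_combination h
  -- pointwise rewritten tangency condition
  have tang' : ∀ k : Fin 3, ∀ a b c : ℝ, tr (F 2 k) f a b c
      = tr (F 0 k) f a b c * dtg 0 f a b c + tr (F 1 k) f a b c * dtg 1 f a b c := by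
    intro k a b c
    have h := htang k a b c
    rw [Fin.sum_univ_three] at h
    have n0 : Nf f 0 a b c = -(dtg 0 f a b c) := rfl
    have n1 : Nf f 1 a b c = -(dtg 1 f a b c) := rfl
    have n2 : Nf f 2 a b c = 1 := rfl
    rw [n0, n1, n2] at h
    linear_combination h
  -- smoothness of traces
  have sU : ∀ m : Fin 3, smooth3 (tr (u m) f) := fun m => smooth3_tr (hu m) hf
  have sF : ∀ m k : Fin 3, smooth3 (tr (F m k) f) := fun m k => smooth3_tr (hF m k) hf
  have sdf : ∀ q : Fin 2, smooth3 (dtg q f) := fun q => smooth3_dtg hf q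
  -- (A_s): tangential derivative of the kinematic boundary condition
  have hAs : ∀ s : Fin 2, ∀ a b c : ℝ, dtg s (tr (u 2) f) a b c
      = Dt u f (dtg s f) a b c + dtg 0 f a b c * dtg s (tr (u 0) f) a b c
        + dtg 1 f a b c * dtg s (tr (u 1) f) a b c := by
    intro s a b c
    have hfun : tr (u 2) f = (fun t x y => d1_3 f t x y
        + tr (u 0) f t x y * dtg 0 f t x y + tr (u 1) f t x y * dtg 1 f t x y) := by
      funext a b c; exact kbc' a b c
    have e : dtg s (tr (u 2) f) a b c = dsp3 s.succ (fun t x y => d1_3 f t x y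
        + tr (u 0) f t x y * dtg 0 f t x y + tr (u 1) f t x y * dtg 1 f t x y) a b c := by
      rw [hfun, dtg_eq]
    have e2 := dsp3_comb (smooth3_d1_3 hf) (sU 0) (sU 1) (sdf 0) (sdf 1) s.succ a b c
    have s1 : dsp3 s.succ (d1_3 f) a b c = d1_3 (dtg s f) a b c := by
      rw [← dtg_eq s]; exact dtg_d1_3 hf s a b c
    have s2 : dsp3 s.succ (dtg 0 f) a b c = dtg 0 (dtg s f) a b c := by
      rw [← dtg_eq s]; exact dtg_dtg hf s 0 a b c
    have s3 : dsp3 s.succ (dtg 1 f) a b c = dtg 1 (dtg s f) a b c := by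
      rw [← dtg_eq s]; exact dtg_dtg hf s 1 a b c
    have eB : ∀ g : ℝ → ℝ → ℝ → ℝ, dsp3 s.succ g a b c = dtg s g a b c := by
      intro g; rw [dtg_eq]
    have hDt : Dt u f (dtg s f) a b c = d1_3 (dtg s f) a b c
        + tr (u 0) f a b c * dtg 0 (dtg s f) a b c
        + tr (u 1) f a b c * dtg 1 (dtg s f) a b c := rfl
    rw [e, e2, s1, s2, s3, eB (tr (u 0) f), eB (tr (u 1) f), hDt]
    ring
  -- (B_s): tangential derivative of the tangency condition
  have hB : ∀ s : Fin 2, ∀ k : Fin 3, ∀ a b c : ℝ, dtg s (tr (F 2 k) f) a b c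
      = DF F f k (dtg s f) a b c + dtg 0 f a b c * dtg s (tr (F 0 k) f) a b c
        + dtg 1 f a b c * dtg s (tr (F 1 k) f) a b c := by
    intro s k a b c
    have hfun : tr (F 2 k) f = (fun t x y =>
        tr (F 0 k) f t x y * dtg 0 f t x y + tr (F 1 k) f t x y * dtg 1 f t x y) := by
      funext a b c; exact tang' k a b c
    have e : dtg s (tr (F 2 k) f) a b c = dsp3 s.succ (fun t x y =>
        tr (F 0 k) f t x y * dtg 0 f t x y + tr (F 1 k) f t x y * dtg 1 f t x y) a b c := by
      rw [hfun, dtg_eq]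
    have e2 := dsp3_comb2 (sF 0 k) (sF 1 k) (sdf 0) (sdf 1) s.succ a b c
    have s2 : dsp3 s.succ (dtg 0 f) a b c = dtg 0 (dtg s f) a b c := by
      rw [← dtg_eq s]; exact dtg_dtg hf s 0 a b c
    have s3 : dsp3 s.succ (dtg 1 f) a b c = dtg 1 (dtg s f) a b c := by
      rw [← dtg_eq s]; exact dtg_dtg hf s 1 a b c
    have eB : ∀ g : ℝ → ℝ → ℝ → ℝ, dsp3 s.succ g a b c = dtg s g a b c := by
      intro g; rw [dtg_eq]
    have hDF : DF F f k (dtg s f) a b c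
        = tr (F 0 k) f a b c * dtg 0 (dtg s f) a b c
          + tr (F 1 k) f a b c * dtg 1 (dtg s f) a b c := rfl
    rw [e, e2, s2, s3, eB (tr (F 0 k) f), eB (tr (F 1 k) f), hDF]
    ring
  -- trace chain rules with literal tangential indices
  have hTu0 : ∀ m : Fin 3, ∀ a b c : ℝ, tr (dsp 0 (u m)) f a b c
      = dtg 0 (tr (u m) f) a b c - tr (dsp 2 (u m)) f a b c * dtg 0 f a b c := by
    intro m a b c
    have h : dtg 0 (tr (u m) f) a b c = tr (dsp 0 (u m)) f a b c
        + tr (dsp 2 (u m)) f a b c * dtg 0 f a b c := tr_dtg (hu m) hf 0 a b c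
    linear_combination -h
  have hTu1 : ∀ m : Fin 3, ∀ a b c : ℝ, tr (dsp 1 (u m)) f a b c
      = dtg 1 (tr (u m) f) a b c - tr (dsp 2 (u m)) f a b c * dtg 1 f a b c := by
    intro m a b c
    have h : dtg 1 (tr (u m) f) a b c = tr (dsp 1 (u m)) f a b c
        + tr (dsp 2 (u m)) f a b c * dtg 1 f a b c := tr_dtg (hu m) hf 1 a b c
    linear_combination -h
  have hTF0 : ∀ m k : Fin 3, ∀ a b c : ℝ, tr (dsp 0 (F m k)) f a b c
      = dtg 0 (tr (F m k) f) a b c - tr (dsp 2 (F m k)) f a b c * dtg 0 f a b c := by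
    intro m k a b c
    have h : dtg 0 (tr (F m k) f) a b c = tr (dsp 0 (F m k)) f a b c
        + tr (dsp 2 (F m k)) f a b c * dtg 0 f a b c := tr_dtg (hF m k) hf 0 a b c
    linear_combination -h
  have hTF1 : ∀ m k : Fin 3, ∀ a b c : ℝ, tr (dsp 1 (F m k)) f a b c
      = dtg 1 (tr (F m k) f) a b c - tr (dsp 2 (F m k)) f a b c * dtg 1 f a b c := by
    intro m k a b c
    have h : dtg 1 (tr (F m k) f) a b c = tr (dsp 1 (F m k)) f a b c
        + tr (dsp 2 (F m k)) f a b c * dtg 1 f a b c := tr_dtg (hF m k) hf 1 a b c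
    linear_combination -h
  -- (C): second tangential deformation derivative
  have hC : ∀ k : Fin 3, DF F f k (DF F f k (dtg i f)) t x y
      = -(DF F f k (dtg 0 f) t x y) * dtg i (tr (F 0 k) f) t x y
        - DF F f k (dtg 1 f) t x y * dtg i (tr (F 1 k) f) t x y
        + (-(dtg 0 f t x y) * DF F f k (dtg i (tr (F 0 k) f)) t x y
           - dtg 1 f t x y * DF F f k (dtg i (tr (F 1 k) f)) t x y
           + DF F f k (dtg i (tr (F 2 k) f)) t x y) := by
    intro k
    have hfun : DF F f k (dtg i f) = (fun a b c => -(dtg 0 f a b c) * dtg i (tr (F 0 k) f) a b c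
        - dtg 1 f a b c * dtg i (tr (F 1 k) f) a b c + dtg i (tr (F 2 k) f) a b c) := by
      funext a b c
      linear_combination -(hB i k a b c)
    have sBi : ∀ m : Fin 3, smooth3 (dtg i (tr (F m k) f)) := fun m => smooth3_dtg (sF m k) i
    have e0 : DF F f k (DF F f k (dtg i f)) t x y
        = tr (F 0 k) f t x y * dsp3 (0:Fin 2).succ (DF F f k (dtg i f)) t x y
          + tr (F 1 k) f t x y * dsp3 (1:Fin 2).succ (DF F f k (dtg i f)) t x y := rfl
    rw [e0, hfun]
    have e1 := dsp3_comb3 (sdf 0) (sdf 1) (sBi 0) (sBi 1) (sBi 2) (0:Fin 2).succ t x y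
    have e2 := dsp3_comb3 (sdf 0) (sdf 1) (sBi 0) (sBi 1) (sBi 2) (1:Fin 2).succ t x y
    rw [e1, e2]
    simp only [show dsp3 (0:Fin 2).succ = dtg 0 from (dtg_eq 0).symm,
      show dsp3 (1:Fin 2).succ = dtg 1 from (dtg_eq 1).symm]
    have dfu : ∀ g : ℝ → ℝ → ℝ → ℝ, DF F f k g t x y
        = tr (F 0 k) f t x y * dtg 0 g t x y + tr (F 1 k) f t x y * dtg 1 g t x y := fun g => rfl
    rw [dfu (dtg 0 f), dfu (dtg 1 f), dfu (dtg i (tr (F 0 k) f)),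
      dfu (dtg i (tr (F 1 k) f)), dfu (dtg i (tr (F 2 k) f))]
    ring
  -- the interior computation: D_t of the trace of 𝔇uₘ
  have hS : ∀ m : Fin 3, Dt u f (tr (Dc i φ (u m)) f) t x y
      = -(tr (dsp m (fun a b c e => dsp i.castSucc p a b c e + dsp 2 p a b c e * φ a b c e)) f t x y)
        + tr (dsp m φ) f t x y * tr (dsp 2 p) f t x y
        + (DF F f 0 (dtg i (tr (F m 0) f)) t x y
           + (dtg i (tr (F 0 0) f) t x y * tr (dsp 0 (F m 0)) f t x y
              + dtg i (tr (F 1 0) f) t x y * tr (dsp 1 (F m 0)) f t x y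
              + dtg i (tr (F 2 0) f) t x y * tr (dsp 2 (F m 0)) f t x y)
           - DF F f 0 (dtg i f) t x y * tr (dsp 2 (F m 0)) f t x y)
        + (DF F f 1 (dtg i (tr (F m 1) f)) t x y
           + (dtg i (tr (F 0 1) f) t x y * tr (dsp 0 (F m 1)) f t x y
              + dtg i (tr (F 1 1) f) t x y * tr (dsp 1 (F m 1)) f t x y
              + dtg i (tr (F 2 1) f) t x y * tr (dsp 2 (F m 1)) f t x y)
           - DF F f 1 (dtg i f) t x y * tr (dsp 2 (F m 1)) f t x y)
        + (DF F f 2 (dtg i (tr (F m 2) f)) t x y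
           + (dtg i (tr (F 0 2) f) t x y * tr (dsp 0 (F m 2)) f t x y
              + dtg i (tr (F 1 2) f) t x y * tr (dsp 1 (F m 2)) f t x y
              + dtg i (tr (F 2 2) f) t x y * tr (dsp 2 (F m 2)) f t x y)
           - DF F f 2 (dtg i f) t x y * tr (dsp 2 (F m 2)) f t x y)
        - (dtg i (tr (u 0) f) t x y * tr (dsp 0 (u m)) f t x y
           + dtg i (tr (u 1) f) t x y * tr (dsp 1 (u m)) f t x y
           + dtg i (tr (u 2) f) t x y * tr (dsp 2 (u m)) f t x y)
        + Dt u f (dtg i f) t x y * tr (dsp 2 (u m)) f t x y := by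
    intro m
    have step1 : Dt u f (tr (Dc i φ (u m)) f) t x y = tr (MD u (Dc i φ (u m))) f t x y :=
      Dt_tr hf kbc' (smooth4_Dc hφs (hu m)) t x y
    have step2 : tr (MD u (Dc i φ (u m))) f t x y
        = tr (Dc i φ (MD u (u m))) f t x y
          - (tr (Dc i φ (u 0)) f t x y * tr (dsp 0 (u m)) f t x y
             + tr (Dc i φ (u 1)) f t x y * tr (dsp 1 (u m)) f t x y
             + tr (Dc i φ (u 2)) f t x y * tr (dsp 2 (u m)) f t x y)
          + tr (MD u φ) f t x y * tr (dsp 2 (u m)) f t x y :=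
      commMD hφs hu (hu m) t x y (f t x y)
    have step3 : ∀ l : Fin 3, tr (Dc i φ (u l)) f t x y = dtg i (tr (u l) f) t x y :=
      fun l => Dc_tr hf hφtr (hu l) t x y
    have step4 : tr (MD u φ) f t x y = Dt u f (dtg i f) t x y := by
      have h := Dt_tr hf kbc' hφs t x y
      have hfn : tr φ f = dtg i f := by funext a b c; exact hφtr a b c
      rw [hfn] at h
      exact h.symm
    have hmom' : MD u (u m) = (fun a b c e => -(dsp m p a b c e)
        + (DF4 F 0 (F m 0) a b c e + DF4 F 1 (F m 1) a b c e + DF4 F 2 (F m 2) a b c e)) := by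
      funext a b c e
      have h := hmom m a b c e
      simp only [Fin.sum_univ_three] at h
      show d1_4 (u m) a b c e + u 0 a b c e * dsp 0 (u m) a b c e
          + u 1 a b c e * dsp 1 (u m) a b c e + u 2 a b c e * dsp 2 (u m) a b c e = _
      show _ = -(dsp m p a b c e) + (
          (F 0 0 a b c e * dsp 0 (F m 0) a b c e + F 1 0 a b c e * dsp 1 (F m 0) a b c e
            + F 2 0 a b c e * dsp 2 (F m 0) a b c e)
          + (F 0 1 a b c e * dsp 0 (F m 1) a b c e + F 1 1 a b c e * dsp 1 (F m 1) a b c e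
            + F 2 1 a b c e * dsp 2 (F m 1) a b c e)
          + (F 0 2 a b c e * dsp 0 (F m 2) a b c e + F 1 2 a b c e * dsp 1 (F m 2) a b c e
            + F 2 2 a b c e * dsp 2 (F m 2) a b c e))
      linear_combination h
    have step5b : tr (Dc i φ (fun a b c e => -(dsp m p a b c e)
        + (DF4 F 0 (F m 0) a b c e + DF4 F 1 (F m 1) a b c e + DF4 F 2 (F m 2) a b c e))) f t x y
        = -(tr (Dc i φ (dsp m p)) f t x y)
          + (tr (Dc i φ (DF4 F 0 (F m 0))) f t x y + tr (Dc i φ (DF4 F 1 (F m 1))) f t x y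
             + tr (Dc i φ (DF4 F 2 (F m 2))) f t x y) :=
      Dc_comb (smooth4_dsp hp m) (smooth4_DF4 hF 0 (hF m 0)) (smooth4_DF4 hF 1 (hF m 1))
        (smooth4_DF4 hF 2 (hF m 2)) t x y (f t x y)
    have step5c : tr (Dc i φ (dsp m p)) f t x y
        = tr (dsp m (fun a b c e => dsp i.castSucc p a b c e + dsp 2 p a b c e * φ a b c e)) f t x y
          - tr (dsp m φ) f t x y * tr (dsp 2 p) f t x y :=
      Dc_dsp_p hφs hp m t x y (f t x y)
    have step5d : ∀ k : Fin 3, tr (Dc i φ (DF4 F k (F m k))) f t x y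
        = tr (DF4 F k (Dc i φ (F m k))) f t x y
          + (tr (Dc i φ (F 0 k)) f t x y * tr (dsp 0 (F m k)) f t x y
             + tr (Dc i φ (F 1 k)) f t x y * tr (dsp 1 (F m k)) f t x y
             + tr (Dc i φ (F 2 k)) f t x y * tr (dsp 2 (F m k)) f t x y)
          - tr (DF4 F k φ) f t x y * tr (dsp 2 (F m k)) f t x y := by
      intro k
      have h : tr (DF4 F k (Dc i φ (F m k))) f t x y
          = tr (Dc i φ (DF4 F k (F m k))) f t x y
            - (tr (Dc i φ (F 0 k)) f t x y * tr (dsp 0 (F m k)) f t x y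
               + tr (Dc i φ (F 1 k)) f t x y * tr (dsp 1 (F m k)) f t x y
               + tr (Dc i φ (F 2 k)) f t x y * tr (dsp 2 (F m k)) f t x y)
            + tr (DF4 F k φ) f t x y * tr (dsp 2 (F m k)) f t x y :=
        commDF4 hφs hF k (hF m k) t x y (f t x y)
      linear_combination -h
    have step5e : ∀ k : Fin 3, tr (DF4 F k (Dc i φ (F m k))) f t x y
        = DF F f k (dtg i (tr (F m k) f)) t x y := by
      intro k
      have h1 := DF_tr (v := Dc i φ (F m k)) hf k (tang' k) (smooth4_Dc hφs (hF m k)) t x y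
      have h2 : tr (Dc i φ (F m k)) f = dtg i (tr (F m k) f) := by
        funext a b c; exact Dc_tr hf hφtr (hF m k) a b c
      rw [h2] at h1
      exact h1.symm
    have step5f : ∀ k : Fin 3, tr (DF4 F k φ) f t x y = DF F f k (dtg i f) t x y := by
      intro k
      have h1 := DF_tr hf k (tang' k) hφs t x y
      have hfn : tr φ f = dtg i f := by funext a b c; exact hφtr a b c
      rw [hfn] at h1
      exact h1.symm
    have step5g : ∀ l k : Fin 3, tr (Dc i φ (F l k)) f t x y = dtg i (tr (F l k) f) t x y :=
      fun l k => Dc_tr hf hφtr (hF l k) t x y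
    rw [step1, step2, step3 0, step3 1, step3 2, step4, hmom', step5b, step5c,
      step5d 0, step5d 1, step5d 2, step5e 0, step5e 1, step5e 2,
      step5f 0, step5f 1, step5f 2,
      step5g 0 0, step5g 1 0, step5g 2 0, step5g 0 1, step5g 1 1, step5g 2 1,
      step5g 0 2, step5g 1 2, step5g 2 2]
    ring
  -- evolution identity for ∂ᵢf with traced 𝔇uₘ
  have step3' : ∀ l : Fin 3, ∀ a b c : ℝ, tr (Dc i φ (u l)) f a b c = dtg i (tr (u l) f) a b c :=
    fun l a b c => Dc_tr hf hφtr (hu l) a b c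
  have hAfun : Dt u f (dtg i f) = (fun a b c => -(dtg 0 f a b c) * tr (Dc i φ (u 0)) f a b c
      - dtg 1 f a b c * tr (Dc i φ (u 1)) f a b c + tr (Dc i φ (u 2)) f a b c) := by
    funext a b c
    have h1 := hAs i a b c
    have h2 := step3' 0 a b c
    have h3 := step3' 1 a b c
    have h4 := step3' 2 a b c
    linear_combination (-1 : ℝ) * h1 + dtg 0 f a b c * h2 + dtg 1 f a b c * h3 - h4
  have sTD : ∀ l : Fin 3, smooth3 (tr (Dc i φ (u l)) f) :=
    fun l => smooth3_tr (smooth4_Dc hφs (hu l)) hf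
  have hLHS : Dt u f (Dt u f (dtg i f)) t x y
      = -(Dt u f (dtg 0 f) t x y) * dtg i (tr (u 0) f) t x y
        - Dt u f (dtg 1 f) t x y * dtg i (tr (u 1) f) t x y
        - dtg 0 f t x y * Dt u f (tr (Dc i φ (u 0)) f) t x y
        - dtg 1 f t x y * Dt u f (tr (Dc i φ (u 1)) f) t x y
        + Dt u f (tr (Dc i φ (u 2)) f) t x y := by
    rw [hAfun]
    have e0 : Dt u f (fun a b c => -(dtg 0 f a b c) * tr (Dc i φ (u 0)) f a b c
        - dtg 1 f a b c * tr (Dc i φ (u 1)) f a b c + tr (Dc i φ (u 2)) f a b c) t x y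
        = dsp3 0 (fun a b c => -(dtg 0 f a b c) * tr (Dc i φ (u 0)) f a b c
            - dtg 1 f a b c * tr (Dc i φ (u 1)) f a b c + tr (Dc i φ (u 2)) f a b c) t x y
          + tr (u 0) f t x y * dsp3 (0:Fin 2).succ (fun a b c =>
              -(dtg 0 f a b c) * tr (Dc i φ (u 0)) f a b c
              - dtg 1 f a b c * tr (Dc i φ (u 1)) f a b c + tr (Dc i φ (u 2)) f a b c) t x y
          + tr (u 1) f t x y * dsp3 (1:Fin 2).succ (fun a b c =>
              -(dtg 0 f a b c) * tr (Dc i φ (u 0)) f a b c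
              - dtg 1 f a b c * tr (Dc i φ (u 1)) f a b c + tr (Dc i φ (u 2)) f a b c) t x y := rfl
    rw [e0]
    have e1 := dsp3_comb3 (sdf 0) (sdf 1) (sTD 0) (sTD 1) (sTD 2) (0:Fin 3) t x y
    have e2 := dsp3_comb3 (sdf 0) (sdf 1) (sTD 0) (sTD 1) (sTD 2) ((0:Fin 2).succ) t x y
    have e3 := dsp3_comb3 (sdf 0) (sdf 1) (sTD 0) (sTD 1) (sTD 2) ((1:Fin 2).succ) t x y
    rw [e1, e2, e3]
    have du : ∀ X : ℝ → ℝ → ℝ → ℝ, Dt u f X t x y = dsp3 0 X t x y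
        + tr (u 0) f t x y * dsp3 (0:Fin 2).succ X t x y
        + tr (u 1) f t x y * dsp3 (1:Fin 2).succ X t x y := fun X => rfl
    rw [du (dtg 0 f), du (dtg 1 f), du (tr (Dc i φ (u 0)) f), du (tr (Dc i φ (u 1)) f),
      du (tr (Dc i φ (u 2)) f), ← step3' 0 t x y, ← step3' 1 t x y]
    ring
  -- assemble everything
  rw [hLHS, hS 0, hS 1, hS 2]
  simp only [Fin.sum_univ_three, Fin.sum_univ_two]
  have n0 : Nf f 0 t x y = -(dtg 0 f t x y) := rfl
  have n1 : Nf f 1 t x y = -(dtg 1 f t x y) := rfl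
  have n2 : Nf f 2 t x y = 1 := rfl
  rw [n0, n1, n2]
  simp only [show ((0:Fin 2).castSucc : Fin 3) = 0 from rfl,
    show ((1:Fin 2).castSucc : Fin 3) = 1 from rfl]
  rw [hTu0 0 t x y, hTu0 1 t x y, hTu0 2 t x y, hTu1 0 t x y, hTu1 1 t x y, hTu1 2 t x y,
    hTF0 0 0 t x y, hTF0 1 0 t x y, hTF0 2 0 t x y,
    hTF0 0 1 t x y, hTF0 1 1 t x y, hTF0 2 1 t x y,
    hTF0 0 2 t x y, hTF0 1 2 t x y, hTF0 2 2 t x y,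
    hTF1 0 0 t x y, hTF1 1 0 t x y, hTF1 2 0 t x y,
    hTF1 0 1 t x y, hTF1 1 1 t x y, hTF1 2 1 t x y,
    hTF1 0 2 t x y, hTF1 1 2 t x y, hTF1 2 2 t x y,
    hC 0, hC 1, hC 2,
    hAs 0 t x y, hAs 1 t x y, hAs i t x y,
    hB 0 0 t x y, hB 0 1 t x y, hB 0 2 t x y,
    hB 1 0 t x y, hB 1 1 t x y, hB 1 2 t x y,
    hB i 0 t x y, hB i 1 t x y, hB i 2 t x y]
  ring
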